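/- arXiv:1006.4658 — 2 statements merged into one kernel-verified Lean document; each statement's English description precedes it below -/
import Mathlib

section
/- If Bott matrices A, B ∈ 𝔅(n) are Bott equivalent, then the orbit spaces T^n/G(A) and T^n/G(B), with their quotient topologies, are homeomorphic. -/
open Matrix

/-- A Bott matrix: conjugate by a permutation matrix to a strictly upper
triangular binary matrix. -/
def IsBott {n : ℕ} (A : Matrix (Fin n) (Fin n) (ZMod 2)) : Prop :=
  ∃ (σ : Equiv.Perm (Fin n)) (B : Matrix (Fin n) (Fin n) (ZMod 2)),
    (∀ i j : Fin n, j ≤ i → B i j = 0) ∧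
    A = σ.permMatrix (ZMod 2) * B * (σ⁻¹).permMatrix (ZMod 2)

/-- (Op1) conjugation by a permutation matrix. -/
def PhiP {n : ℕ} (σ : Equiv.Perm (Fin n)) (A : Matrix (Fin n) (Fin n) (ZMod 2)) :
    Matrix (Fin n) (Fin n) (ZMod 2) :=
  σ.permMatrix (ZMod 2) * A * (σ⁻¹).permMatrix (ZMod 2)

/-- (Op2) `Φ_k(A)_j = A_j + A^k_j A_k`. -/
def Phi2 {n : ℕ} (k : Fin n) (A : Matrix (Fin n) (Fin n) (ZMod 2)) :
    Matrix (Fin n) (Fin n) (ZMod 2) :=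
  fun i j => A i j + A k j * A i k

/-- (Op3) `Φ^{ℓ,m}(A)`: add the `ℓ`-th row to the `m`-th row. -/
def Phi3 {n : ℕ} (l m : Fin n) (A : Matrix (Fin n) (Fin n) (ZMod 2)) :
    Matrix (Fin n) (Fin n) (ZMod 2) :=
  fun i j => if i = m then A l j + A m j else A i j

/-- One application of one of the operations (Op1), (Op2), (Op3). -/
inductive BottStep {n : ℕ} :
    Matrix (Fin n) (Fin n) (ZMod 2) → Matrix (Fin n) (Fin n) (ZMod 2) → Prop
  | op1 (σ : Equiv.Perm (Fin n)) (A) : BottStep A (PhiP σ A)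
  | op2 (k : Fin n) (A) : BottStep A (Phi2 k A)
  | op3 (l m : Fin n) (A) (h : l ≠ m) (hc : ∀ i, A i l = A i m) :
      BottStep A (Phi3 l m A)

/-- Bott equivalence of Bott matrices: a finite sequence of the operations
(Op1), (Op2), (Op3). -/
def BottEquivM {n : ℕ} (A B : Matrix (Fin n) (Fin n) (ZMod 2)) : Prop :=
  Relation.ReflTransGen BottStep A B

/-- The torus `T^n = (S¹)^n ⊆ ℂ^n`. -/
abbrev Torus (n : ℕ) : Type :=
  {z : Fin n → ℂ // ∀ i, ‖z i‖ = 1}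

/-- `z(a)`: `z` if `a = 0` and the complex conjugate `z̄` if `a = 1`. -/
noncomputable def conjPow (a : ZMod 2) (z : ℂ) : ℂ :=
  if a = 0 then z else (starRingEnd ℂ) z

/-- The involution `a_i` of `ℂ^n` associated with a binary matrix `A`. -/
noncomputable def aMap {n : ℕ} (A : Matrix (Fin n) (Fin n) (ZMod 2)) (i : Fin n)
    (z : Fin n → ℂ) : Fin n → ℂ :=
  fun j => if j = i then -z i else conjPow (A i j) (z j)

lemma aMap_mem {n : ℕ} (A : Matrix (Fin n) (Fin n) (ZMod 2)) (i : Fin n)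
    (z : Fin n → ℂ) (hz : ∀ j, ‖z j‖ = 1) (j : Fin n) :
    ‖aMap A i z j‖ = 1 := by
  unfold aMap conjPow
  split_ifs <;> simp [hz]

/-- The involution `a_i` of `T^n`. -/
noncomputable def aMapT {n : ℕ} (A : Matrix (Fin n) (Fin n) (ZMod 2)) (i : Fin n)
    (z : Torus n) : Torus n :=
  ⟨aMap A i z.1, aMap_mem A i z.1 z.2⟩

/-- The composition `∏_{i ∈ S} a_i` on `T^n`. -/
noncomputable def prodMapT {n : ℕ} (A : Matrix (Fin n) (Fin n) (ZMod 2))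
    (S : Finset (Fin n)) : Torus n → Torus n :=
  (S.sort (· ≤ ·)).foldr (fun i f => aMapT A i ∘ f) id

/-- The orbit relation of the group `G(A)` (generated by `a_1,…,a_n`) on `T^n`. -/
def orbitRel {n : ℕ} (A : Matrix (Fin n) (Fin n) (ZMod 2)) :
    Torus n → Torus n → Prop :=
  fun z w => ∃ S : Finset (Fin n), prodMapT A S z = w

/-- The orbit space `T^n/G(A)` with its quotient topology. -/
def OrbitSpace {n : ℕ} (A : Matrix (Fin n) (Fin n) (ZMod 2)) : Type :=
  Quot (orbitRel A)

noncomputable instance {n : ℕ} (A : Matrix (Fin n) (Fin n) (ZMod 2)) :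
    TopologicalSpace (OrbitSpace A) :=
  instTopologicalSpaceQuot

section Helpers
variable {n : ℕ}
open Matrix Complex

lemma zmod2_cases (a : ZMod 2) : a = 0 ∨ a = 1 := by revert a; decide

lemma two_eq_zero' : (1 + 1 : ZMod 2) = 0 := rfl

/-- sign of a mod-2 number -/
noncomputable def sgn (a : ZMod 2) : ℂ := if a = 0 then 1 else -1

lemma sgn_add (a b : ZMod 2) : sgn (a + b) = sgn a * sgn b := by
  rcases zmod2_cases a with ha | ha <;> rcases zmod2_cases b with hb | hb <;>
      subst ha <;> subst hb <;>
    simp only [add_zero, zero_add, two_eq_zero', sgn, if_pos rfl] <;> norm_num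

lemma abs_sgn (a : ZMod 2) : ‖sgn a‖ = 1 := by
  rcases zmod2_cases a with ha | ha <;> subst ha <;> norm_num [sgn]

lemma conjPow_conjPow (a b : ZMod 2) (z : ℂ) :
    conjPow a (conjPow b z) = conjPow (a + b) z := by
  rcases zmod2_cases a with ha | ha <;> rcases zmod2_cases b with hb | hb <;>
    subst ha <;> subst hb <;> simp [conjPow, two_eq_zero']

lemma conjPow_mul (a : ZMod 2) (x y : ℂ) :
    conjPow a (x * y) = conjPow a x * conjPow a y := by
  rcases zmod2_cases a with ha | ha <;> subst ha <;> simp [conjPow]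

lemma conjPow_sgn (a b : ZMod 2) : conjPow a (sgn b) = sgn b := by
  rcases zmod2_cases a with ha | ha <;> rcases zmod2_cases b with hb | hb <;>
    subst ha <;> subst hb <;> simp [conjPow, sgn]

lemma abs_conjPow (a : ZMod 2) (z : ℂ) : ‖conjPow a z‖ = ‖z‖ := by
  rcases zmod2_cases a with ha | ha <;> subst ha <;> simp [conjPow]

lemma conjPow_zero (z : ℂ) : conjPow 0 z = z := rfl

/-- The "product of generators indexed by `v`" map, in closed form. -/
noncomputable def gMapT (A : Matrix (Fin n) (Fin n) (ZMod 2)) (v : Fin n → ZMod 2)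
    (z : Torus n) : Torus n :=
  ⟨fun q => sgn (v q) * conjPow (∑ i, v i * A i q) (z.1 q), by
    intro q
    dsimp only
    rw [norm_mul, abs_sgn, abs_conjPow, z.2, one_mul]⟩

end Helpers

section Bridge
variable {n : ℕ}
open Matrix Complex

/-- add `e` at position `k` -/
def upd (v : Fin n → ZMod 2) (k : Fin n) (e : ZMod 2) : Fin n → ZMod 2 :=
  fun j => v j + if j = k then e else 0

lemma upd_apply (v : Fin n → ZMod 2) (k : Fin n) (e : ZMod 2) (j : Fin n) :
    upd v k e j = v j + if j = k then e else 0 := rfl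

lemma ite_sum (e : ZMod 2) (k : Fin n) (X : Fin n → ZMod 2) :
    (∑ i, (if i = k then e else 0) * X i) = e * X k := by
  rw [Finset.sum_eq_single k]
  · simp
  · intro b _ hb; simp [hb]
  · intro hk; exact absurd (Finset.mem_univ k) hk

lemma upd_sum (v : Fin n → ZMod 2) (k : Fin n) (e : ZMod 2) (X : Fin n → ZMod 2) :
    (∑ i, upd v k e i * X i) = (∑ i, v i * X i) + e * X k := by
  simp only [upd_apply, add_mul, Finset.sum_add_distrib, ite_sum]

lemma gMapT_coord (A : Matrix (Fin n) (Fin n) (ZMod 2)) (v : Fin n → ZMod 2)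
    (z : Torus n) (q : Fin n) :
    (gMapT A v z).1 q = sgn (v q) * conjPow (∑ i, v i * A i q) (z.1 q) := rfl

lemma aMapT_gMapT (A : Matrix (Fin n) (Fin n) (ZMod 2)) (hd : ∀ i, A i i = 0)
    (i : Fin n) (v : Fin n → ZMod 2) (z : Torus n) :
    aMapT A i (gMapT A v z) = gMapT A (upd v i 1) z := by
  apply Subtype.ext; funext q
  show aMap A i (gMapT A v z).1 q = (gMapT A (upd v i 1) z).1 q
  rw [gMapT_coord, upd_sum, one_mul]
  unfold aMap
  by_cases hq : q = i
  · subst hq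
    rw [if_pos rfl, gMapT_coord, hd q, add_zero, upd_apply, if_pos rfl,
      sgn_add]
    rw [show sgn (v q) * sgn 1 * conjPow (∑ i, v i * A i q) (z.1 q)
        = -(sgn (v q)) * conjPow (∑ i, v i * A i q) (z.1 q) by norm_num [sgn]]
    ring
  · rw [if_neg hq, gMapT_coord, conjPow_mul, conjPow_sgn, conjPow_conjPow,
      upd_apply, if_neg hq, add_zero, add_comm (A i q)]

lemma foldr_eq_gMapT (A : Matrix (Fin n) (Fin n) (ZMod 2)) (hd : ∀ i, A i i = 0) :
    ∀ L : List (Fin n), ∀ z : Torus n,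
      (L.foldr (fun i f => aMapT A i ∘ f) id) z
        = gMapT A (fun j => ((L.count j : ℕ) : ZMod 2)) z := by
  intro L
  induction L with
  | nil =>
    intro z
    apply Subtype.ext; funext q
    simp [gMapT_coord, sgn, conjPow]
  | cons i L ih =>
    intro z
    show aMapT A i ((L.foldr (fun i f => aMapT A i ∘ f) id) z) = _
    rw [ih z, aMapT_gMapT A hd]
    congr 1
    funext j
    rw [upd_apply]
    simp only [List.count_cons, beq_iff_eq]
    push_cast
    by_cases hj : j = i
    · subst hj; simp
    · rw [if_neg hj, if_neg (fun c => hj c.symm), add_zero]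

lemma prodMapT_eq_gMapT (A : Matrix (Fin n) (Fin n) (ZMod 2)) (hd : ∀ i, A i i = 0)
    (S : Finset (Fin n)) (z : Torus n) :
    prodMapT A S z = gMapT A (fun j => if j ∈ S then 1 else 0) z := by
  rw [show prodMapT A S z = ((S.sort (· ≤ ·)).foldr (fun i f => aMapT A i ∘ f) id) z from rfl,
    foldr_eq_gMapT A hd]
  congr 1
  funext j
  by_cases hj : j ∈ S
  · rw [if_pos hj, List.count_eq_one_of_mem (S.sort_nodup _) ((Finset.mem_sort _).2 hj)]
    norm_num
  · rw [if_neg hj, List.count_eq_zero_of_not_mem (fun c => hj ((Finset.mem_sort _).1 c))]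
    norm_num

lemma orbitRel_iff_g (A : Matrix (Fin n) (Fin n) (ZMod 2)) (hd : ∀ i, A i i = 0)
    (z w : Torus n) : orbitRel A z w ↔ ∃ v, gMapT A v z = w := by
  constructor
  · rintro ⟨S, hS⟩
    exact ⟨_, by rw [← prodMapT_eq_gMapT A hd S z, hS]⟩
  · rintro ⟨v, hv⟩
    refine ⟨Finset.univ.filter (fun j => v j = 1), ?_⟩
    rw [prodMapT_eq_gMapT A hd, ← hv]
    congr 1
    funext j
    simp only [Finset.mem_filter, Finset.mem_univ, true_and]
    rcases zmod2_cases (v j) with h | h <;> simp [h]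

end Bridge

section Transfer
variable {n : ℕ}
open Matrix

lemma transfer (A B : Matrix (Fin n) (Fin n) (ZMod 2))
    (hdA : ∀ i, A i i = 0) (hdB : ∀ i, B i i = 0)
    (h h' : Torus n → Torus n) (hcont : Continuous h) (hcont' : Continuous h')
    (hi1 : ∀ z, h' (h z) = z) (hi2 : ∀ z, h (h' z) = z)
    (φ : (Fin n → ZMod 2) → Fin n → ZMod 2)
    (hφ : ∀ v z, h (gMapT A v z) = gMapT B (φ v) (h z))
    (hsurj : ∀ v, ∃ u, φ u = v) :
    Nonempty (OrbitSpace A ≃ₜ OrbitSpace B) := by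
  have s1 : ∀ z w, orbitRel A z w → orbitRel B (h z) (h w) := by
    intro z w hr
    obtain ⟨v, hv⟩ := (orbitRel_iff_g A hdA z w).mp hr
    exact (orbitRel_iff_g B hdB _ _).mpr ⟨φ v, by rw [← hφ, hv]⟩
  have s2 : ∀ z w, orbitRel B z w → orbitRel A (h' z) (h' w) := by
    intro z w hr
    obtain ⟨v, hv⟩ := (orbitRel_iff_g B hdB z w).mp hr
    obtain ⟨u, hu⟩ := hsurj v
    refine (orbitRel_iff_g A hdA _ _).mpr ⟨u, ?_⟩
    have : h (gMapT A u (h' z)) = w := by rw [hφ, hu, hi2, hv]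
    rw [← this, hi1]
  refine ⟨Homeomorph.mk ⟨Quot.map h s1, Quot.map h' s2, ?_, ?_⟩ ?_ ?_⟩
  · intro q
    induction q using Quot.ind with
    | _ z => show Quot.mk _ (h' (h z)) = Quot.mk _ z; rw [hi1]
  · intro q
    induction q using Quot.ind with
    | _ z => show Quot.mk _ (h (h' z)) = Quot.mk _ z; rw [hi2]
  · exact continuous_quot_lift _ (continuous_quot_mk.comp hcont)
  · exact continuous_quot_lift _ (continuous_quot_mk.comp hcont')

/-- acyclicity: there is a height function -/
def Acyc {n : ℕ} (A : Matrix (Fin n) (Fin n) (ZMod 2)) : Prop :=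
  ∃ f : Fin n → ℕ, ∀ i j, A i j ≠ 0 → f i < f j

lemma Acyc.diag {A : Matrix (Fin n) (Fin n) (ZMod 2)} (h : Acyc A) (i : Fin n) :
    A i i = 0 := by
  obtain ⟨f, hf⟩ := h
  by_contra hc
  exact lt_irrefl _ (hf i i hc)

lemma Acyc.asym {A : Matrix (Fin n) (Fin n) (ZMod 2)} (h : Acyc A) (i j : Fin n) :
    A i j * A j i = 0 := by
  obtain ⟨f, hf⟩ := h
  by_cases h1 : A i j = 0
  · rw [h1, zero_mul]
  by_cases h2 : A j i = 0
  · rw [h2, mul_zero]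
  exact absurd (lt_trans (hf i j h1) (hf j i h2)) (lt_irrefl _)

lemma PhiP_apply (σ : Equiv.Perm (Fin n)) (A : Matrix (Fin n) (Fin n) (ZMod 2))
    (i j : Fin n) : PhiP σ A i j = A (σ i) (σ j) := by
  unfold PhiP Equiv.Perm.permMatrix
  rw [PEquiv.toMatrix_toPEquiv_mul, PEquiv.mul_toMatrix_toPEquiv]
  simp [Matrix.submatrix_apply, Equiv.Perm.inv_def]

lemma isBott_acyc {A : Matrix (Fin n) (Fin n) (ZMod 2)} (h : IsBott A) : Acyc A := by
  obtain ⟨σ, C, hC, hA⟩ := h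
  refine ⟨fun i => (σ i : ℕ), fun i j hij => ?_⟩
  have : A i j = C (σ i) (σ j) := by rw [hA]; exact PhiP_apply σ C i j
  rw [this] at hij
  have : ¬ (σ j ≤ σ i) := fun hle => hij (hC _ _ hle)
  exact_mod_cast lt_of_not_ge this

end Transfer

section Op1
variable {n : ℕ}
open Matrix

/-- coordinate-permuting homeomorphism of the torus -/
def permT (ρ : Equiv.Perm (Fin n)) (z : Torus n) : Torus n :=
  ⟨fun q => z.1 (ρ q), fun q => z.2 (ρ q)⟩

lemma permT_continuous (ρ : Equiv.Perm (Fin n)) : Continuous (permT ρ) := by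
  unfold permT
  refine Continuous.subtype_mk ?_ _
  refine continuous_pi fun q => ?_
  exact (continuous_apply (ρ q)).comp continuous_subtype_val

lemma permT_permT (ρ : Equiv.Perm (Fin n)) (z : Torus n) :
    permT ρ⁻¹ (permT ρ z) = z := by
  apply Subtype.ext; funext q
  show z.1 (ρ (ρ⁻¹ q)) = z.1 q
  exact congrArg z.1 (ρ.apply_symm_apply q)

lemma permT_gMapT (A A' : Matrix (Fin n) (Fin n) (ZMod 2)) (ρ : Equiv.Perm (Fin n))
    (hA' : ∀ i j, A' i j = A (ρ i) (ρ j)) (v : Fin n → ZMod 2) (z : Torus n) :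
    permT ρ (gMapT A v z) = gMapT A' (fun q => v (ρ q)) (permT ρ z) := by
  apply Subtype.ext; funext q
  show (gMapT A v z).1 (ρ q) = _
  rw [gMapT_coord, gMapT_coord]
  show _ = sgn (v (ρ q)) * conjPow (∑ i, v (ρ i) * A' i q) (z.1 (ρ q))
  congr 2
  rw [show (∑ i, v (ρ i) * A' i q) = ∑ i, v (ρ i) * A (ρ i) (ρ q) from
    Finset.sum_congr rfl fun i _ => by rw [hA']]
  exact (Equiv.sum_comp ρ (fun j => v j * A j (ρ q))).symm

lemma op1_homeo (A : Matrix (Fin n) (Fin n) (ZMod 2)) (σ : Equiv.Perm (Fin n))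
    (hAc : Acyc A) :
    Nonempty (OrbitSpace A ≃ₜ OrbitSpace (PhiP σ A)) := by
  have hd' : ∀ i, PhiP σ A i i = 0 := fun i => by rw [PhiP_apply]; exact hAc.diag _
  refine transfer A (PhiP σ A) hAc.diag hd' (permT σ) (permT σ⁻¹)
    (permT_continuous σ) (permT_continuous σ⁻¹) (permT_permT σ)
    (fun z => by
      have := permT_permT σ⁻¹ z
      rwa [inv_inv] at this)
    (fun v q => v (σ q))
    (fun v z => permT_gMapT A (PhiP σ A) σ (PhiP_apply σ A) v z)
    (fun v => ⟨fun q => v (σ⁻¹ q), by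
      funext q
      show v (σ⁻¹ (σ q)) = v q
      exact congrArg v (σ.symm_apply_apply q)⟩)

lemma op1_acyc (A : Matrix (Fin n) (Fin n) (ZMod 2)) (σ : Equiv.Perm (Fin n))
    (hAc : Acyc A) : Acyc (PhiP σ A) := by
  obtain ⟨f, hf⟩ := hAc
  exact ⟨fun i => f (σ i), fun i j hij => hf _ _ (by rwa [PhiP_apply] at hij)⟩

end Op1

section Op2
variable {n : ℕ}
open Matrix Complex

/-- scale coordinate `k` by a unit scalar `c` -/
noncomputable def scaleT (k : Fin n) (c : ℂ) (hc : ‖c‖ = 1) (z : Torus n) :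
    Torus n :=
  ⟨fun q => if q = k then c * z.1 q else z.1 q, by
    intro q
    dsimp only
    split_ifs
    · rw [norm_mul, hc, z.2, one_mul]
    · exact z.2 q⟩

lemma scaleT_continuous (k : Fin n) (c : ℂ) (hc : ‖c‖ = 1) :
    Continuous (scaleT k c hc) := by
  unfold scaleT
  refine Continuous.subtype_mk ?_ _
  refine continuous_pi fun q => ?_
  by_cases hq : q = k
  · simp only [hq, if_pos rfl]
    exact continuous_const.mul ((continuous_apply k).comp continuous_subtype_val)
  · simp only [if_neg hq]
    exact (continuous_apply q).comp continuous_subtype_val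

lemma scaleT_scaleT (k : Fin n) (c c' : ℂ) (hc : ‖c‖ = 1)
    (hc' : ‖c'‖ = 1) (hcc : c' * c = 1) (z : Torus n) :
    scaleT k c' hc' (scaleT k c hc z) = z := by
  apply Subtype.ext; funext q
  show (if q = k then c' * (if q = k then c * z.1 q else z.1 q) else
    (if q = k then c * z.1 q else z.1 q)) = z.1 q
  by_cases hq : q = k
  · rw [if_pos hq, if_pos hq, ← mul_assoc, hcc, one_mul]
  · rw [if_neg hq, if_neg hq]

lemma phi2_sum (A : Matrix (Fin n) (Fin n) (ZMod 2)) (k : Fin n) (hkk : A k k = 0)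
    (v : Fin n → ZMod 2) (q : Fin n) :
    (∑ i, upd v k (∑ i, v i * A i k) i * Phi2 k A i q) = ∑ i, v i * A i q := by
  set e := ∑ i, v i * A i k with he
  rw [upd_sum]
  have h1 : (∑ i, v i * Phi2 k A i q) = (∑ i, v i * A i q) + e * A k q := by
    have : ∀ i, v i * Phi2 k A i q = v i * A i q + (v i * A i k) * A k q := by
      intro i; show v i * (A i q + A k q * A i k) = _; ring
    rw [Finset.sum_congr rfl (fun i _ => this i), Finset.sum_add_distrib,
      ← Finset.sum_mul, ← he]
  have h2 : Phi2 k A k q = A k q := by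
    show A k q + A k q * A k k = A k q
    rw [hkk, mul_zero, add_zero]
  rw [h1, h2]
  have : ∀ x : ZMod 2, x + x = 0 := by decide
  rw [add_assoc, this (e * A k q), add_zero]

lemma scaleT_gMapT (A : Matrix (Fin n) (Fin n) (ZMod 2)) (k : Fin n) (hkk : A k k = 0)
    (c : ℂ) (hc : ‖c‖ = 1) (hcc : (starRingEnd ℂ) c = -c)
    (v : Fin n → ZMod 2) (z : Torus n) :
    scaleT k c hc (gMapT A v z)
      = gMapT (Phi2 k A) (upd v k (∑ i, v i * A i k)) (scaleT k c hc z) := by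
  apply Subtype.ext; funext q
  show (if q = k then c * (gMapT A v z).1 q else (gMapT A v z).1 q)
      = sgn (upd v k (∑ i, v i * A i k) q) *
        conjPow (∑ i, upd v k (∑ i, v i * A i k) i * Phi2 k A i q)
          ((scaleT k c hc z).1 q)
  rw [phi2_sum A k hkk, gMapT_coord]
  set e := ∑ i, v i * A i k with he
  set E := ∑ i, v i * A i q with hE
  by_cases hq : q = k
  · subst hq
    rw [if_pos rfl, upd_apply, if_pos rfl]
    have hek : E = e := by rw [he, hE]
    have hsc : (scaleT q c hc z).1 q = c * z.1 q := by
      show (if q = q then c * z.1 q else z.1 q) = c * z.1 q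
      rw [if_pos rfl]
    rw [hsc, conjPow_mul, sgn_add, hek]
    have key : c = sgn e * conjPow e c := by
      rcases zmod2_cases e with h | h <;> rw [h]
      · simp [sgn, conjPow]
      · simp only [sgn, conjPow, if_neg one_ne_zero, hcc]
        ring
    calc c * (sgn (v q) * conjPow e (z.1 q))
        = sgn (v q) * (sgn e * conjPow e c) * conjPow e (z.1 q) := by
          rw [← key]; ring
      _ = sgn (v q) * sgn e * (conjPow e c * conjPow e (z.1 q)) := by ring
  · rw [if_neg hq, upd_apply, if_neg hq, add_zero]
    show sgn (v q) * conjPow E (z.1 q) = sgn (v q) * conjPow E ((scaleT k c hc z).1 q)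
    have : (scaleT k c hc z).1 q = z.1 q := by
      show (if q = k then c * z.1 q else z.1 q) = z.1 q
      rw [if_neg hq]
    rw [this]

end Op2

section Op2H
variable {n : ℕ}
open Matrix Complex

lemma zmod_self_add (x : ZMod 2) : x + x = 0 := by revert x; decide

lemma upd_upd (v : Fin n → ZMod 2) (k : Fin n) (e : ZMod 2) :
    upd (upd v k e) k e = v := by
  funext j
  rw [upd_apply, upd_apply]
  by_cases hj : j = k <;> simp_all [add_assoc, zmod_self_add]

lemma op2_acyc (A : Matrix (Fin n) (Fin n) (ZMod 2)) (k : Fin n) (hAc : Acyc A) :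
    Acyc (Phi2 k A) := by
  obtain ⟨f, hf⟩ := hAc
  refine ⟨f, fun i j hij => ?_⟩
  have : A i j ≠ 0 ∨ (A k j ≠ 0 ∧ A i k ≠ 0) := by
    by_contra hcon
    push_neg at hcon
    obtain ⟨h1, h2⟩ := hcon
    apply hij
    show A i j + A k j * A i k = 0
    by_cases h3 : A k j = 0
    · rw [h1, h3, zero_mul, add_zero]
    · rw [h1, h2 h3, mul_zero, add_zero]
  rcases this with h | ⟨h1, h2⟩
  · exact hf _ _ h
  · exact lt_trans (hf _ _ h2) (hf _ _ h1)

lemma op2_homeo (A : Matrix (Fin n) (Fin n) (ZMod 2)) (k : Fin n) (hAc : Acyc A) :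
    Nonempty (OrbitSpace A ≃ₜ OrbitSpace (Phi2 k A)) := by
  have habsI : ‖Complex.I‖ = 1 := Complex.norm_I
  have habsI' : ‖-Complex.I‖ = 1 := by rw [norm_neg, Complex.norm_I]
  have hd' : ∀ i, Phi2 k A i i = 0 := (op2_acyc A k hAc).diag
  refine transfer A (Phi2 k A) hAc.diag hd'
    (scaleT k Complex.I habsI) (scaleT k (-Complex.I) habsI')
    (scaleT_continuous _ _ _) (scaleT_continuous _ _ _)
    (scaleT_scaleT k _ _ _ _ (by simp [Complex.I_mul_I]))
    (scaleT_scaleT k _ _ _ _ (by simp [Complex.I_mul_I]))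
    (fun v => upd v k (∑ i, v i * A i k))
    (fun v z => scaleT_gMapT A k (hAc.diag k) Complex.I habsI
      (by rw [Complex.conj_I]) v z)
    (fun v => ?_)
  refine ⟨upd v k (∑ i, v i * A i k), ?_⟩
  have he : (∑ i, upd v k (∑ i, v i * A i k) i * A i k)
      = ∑ i, v i * A i k := by
    rw [upd_sum, hAc.diag k, mul_zero, add_zero]
  show upd (upd v k (∑ i, v i * A i k)) k (∑ i, upd v k (∑ i, v i * A i k) i * A i k) = v
  rw [he, upd_upd]

end Op2H

section Op3
variable {n : ℕ}
open Matrix Complex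

lemma unit_mul_conj {x : ℂ} (hx : ‖x‖ = 1) :
    x * (starRingEnd ℂ) x = 1 := by
  rw [Complex.mul_conj, Complex.normSq_eq_norm_sq, hx]
  norm_num

lemma unit_conj_mul {x : ℂ} (hx : ‖x‖ = 1) :
    (starRingEnd ℂ) x * x = 1 := by
  rw [mul_comm]; exact unit_mul_conj hx

/-- multiply coordinate `l` by (a conjugate power of) coordinate `m` -/
noncomputable def mulT (l m : Fin n) (a : ZMod 2) (z : Torus n) : Torus n :=
  ⟨fun q => if q = l then z.1 l * conjPow a (z.1 m) else z.1 q, by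
    intro q
    dsimp only
    split_ifs
    · rw [norm_mul, abs_conjPow, z.2, z.2, one_mul]
    · exact z.2 q⟩

lemma mulT_continuous (l m : Fin n) (a : ZMod 2) : Continuous (mulT l m a) := by
  unfold mulT
  refine Continuous.subtype_mk ?_ _
  refine continuous_pi fun q => ?_
  by_cases hq : q = l
  · simp only [hq, if_pos rfl]
    refine Continuous.mul ((continuous_apply l).comp continuous_subtype_val) ?_
    rcases zmod2_cases a with h | h <;> rw [h]
    · exact (continuous_apply m).comp continuous_subtype_val
    · exact Complex.continuous_conj.comp ((continuous_apply m).comp continuous_subtype_val)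
  · simp only [if_neg hq]
    exact (continuous_apply q).comp continuous_subtype_val

lemma mulT_coord_ne (l m : Fin n) (a : ZMod 2) (z : Torus n) {q : Fin n} (hq : q ≠ l) :
    (mulT l m a z).1 q = z.1 q := by
  show (if q = l then _ else z.1 q) = z.1 q
  rw [if_neg hq]

lemma mulT_coord_l (l m : Fin n) (a : ZMod 2) (z : Torus n) :
    (mulT l m a z).1 l = z.1 l * conjPow a (z.1 m) := by
  show (if l = l then _ else _) = _
  rw [if_pos rfl]

lemma mulT_mulT (l m : Fin n) (hlm : l ≠ m) (z : Torus n) :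
    mulT l m 1 (mulT l m 0 z) = z := by
  apply Subtype.ext; funext q
  by_cases hq : q = l
  · rw [hq, mulT_coord_l, mulT_coord_l, mulT_coord_ne l m 0 z (fun c => hlm c.symm)]
    show z.1 l * z.1 m * (starRingEnd ℂ) (z.1 m) = z.1 l
    rw [mul_assoc, unit_mul_conj (z.2 m), mul_one]
  · rw [mulT_coord_ne _ _ _ _ hq, mulT_coord_ne _ _ _ _ hq]

lemma mulT_mulT' (l m : Fin n) (hlm : l ≠ m) (z : Torus n) :
    mulT l m 0 (mulT l m 1 z) = z := by
  apply Subtype.ext; funext q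
  by_cases hq : q = l
  · rw [hq, mulT_coord_l, mulT_coord_l, mulT_coord_ne l m 1 z (fun c => hlm c.symm)]
    show z.1 l * (starRingEnd ℂ) (z.1 m) * z.1 m = z.1 l
    rw [mul_assoc, unit_conj_mul (z.2 m), mul_one]
  · rw [mulT_coord_ne _ _ _ _ hq, mulT_coord_ne _ _ _ _ hq]

lemma phi3_sum (A : Matrix (Fin n) (Fin n) (ZMod 2)) (l m : Fin n) (hlm : l ≠ m)
    (v : Fin n → ZMod 2) (q : Fin n) :
    (∑ i, upd v l (v m) i * Phi3 l m A i q) = ∑ i, v i * A i q := by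
  rw [upd_sum]
  have h1 : (∑ i, v i * Phi3 l m A i q)
      = (∑ i, v i * A i q) + v m * A l q := by
    have key : ∀ i, v i * Phi3 l m A i q
        = v i * A i q + (if i = m then v m * A l q else 0) := by
      intro i
      by_cases him : i = m
      · show v i * (if i = m then A l q + A m q else A i q)
            = v i * A i q + (if i = m then v m * A l q else 0)
        rw [if_pos him, if_pos him, him]
        ring
      · show v i * (if i = m then A l q + A m q else A i q) = _
        rw [if_neg him, if_neg him, add_zero]
    rw [Finset.sum_congr rfl (fun i _ => key i), Finset.sum_add_distrib]
    congr 1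
    rw [Finset.sum_eq_single m]
    · rw [if_pos rfl]
    · intro b _ hb; rw [if_neg hb]
    · intro hm; exact absurd (Finset.mem_univ m) hm
  have h2 : Phi3 l m A l q = A l q := by
    show (if l = m then A l q + A m q else A l q) = A l q
    rw [if_neg hlm]
  rw [h1, h2, add_assoc, zmod_self_add, add_zero]

lemma mulT_gMapT (A : Matrix (Fin n) (Fin n) (ZMod 2)) (l m : Fin n) (hlm : l ≠ m)
    (hc : ∀ i, A i l = A i m) (v : Fin n → ZMod 2) (z : Torus n) :
    mulT l m 0 (gMapT A v z)
      = gMapT (Phi3 l m A) (upd v l (v m)) (mulT l m 0 z) := by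
  apply Subtype.ext; funext q
  have hsum := phi3_sum A l m hlm v
  by_cases hq : q = l
  · rw [hq, mulT_coord_l, gMapT_coord, gMapT_coord, gMapT_coord, hsum l,
      mulT_coord_l, upd_apply, if_pos rfl, sgn_add]
    have hEm : (∑ i, v i * A i m) = ∑ i, v i * A i l :=
      Finset.sum_congr rfl fun i _ => by rw [hc i]
    rw [hEm, conjPow_zero, conjPow_zero, conjPow_mul]
    ring
  · rw [mulT_coord_ne _ _ _ _ hq, gMapT_coord, gMapT_coord, hsum q,
      mulT_coord_ne _ _ _ _ hq, upd_apply, if_neg hq, add_zero]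

lemma op3_acyc (A : Matrix (Fin n) (Fin n) (ZMod 2)) (l m : Fin n) (hlm : l ≠ m)
    (hc : ∀ i, A i l = A i m) (hAc : Acyc A) : Acyc (Phi3 l m A) := by
  obtain ⟨f, hf⟩ := hAc
  have hAll : A l l = 0 := by by_contra hz; exact lt_irrefl _ (hf l l hz)
  have hAmm : A m m = 0 := by by_contra hz; exact lt_irrefl _ (hf m m hz)
  refine ⟨fun i => if i = m then 2 * min (f l) (f m) + 1 else 2 * f i,
    fun i j hij => ?_⟩
  dsimp only
  by_cases him : i = m
  · have hor : A l j ≠ 0 ∨ A m j ≠ 0 := by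
      by_contra hcon
      push_neg at hcon
      apply hij
      show (if i = m then A l j + A m j else A i j) = 0
      rw [if_pos him, hcon.1, hcon.2, add_zero]
    have hjm : j ≠ m := by
      rintro rfl
      rcases hor with h | h
      · rw [← hc l] at h; exact h hAll
      · exact h hAmm
    rw [if_pos him, if_neg hjm]
    have : min (f l) (f m) < f j := by
      rcases hor with h | h
      · exact lt_of_le_of_lt (min_le_left _ _) (hf l j h)
      · exact lt_of_le_of_lt (min_le_right _ _) (hf m j h)
    omega
  · have hij' : A i j ≠ 0 := by
      intro hz
      apply hij
      show (if i = m then A l j + A m j else A i j) = 0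
      rw [if_neg him, hz]
    rw [if_neg him]
    by_cases hjm : j = m
    · have h1 : A i l ≠ 0 := by rw [hc i, ← hjm]; exact hij'
      rw [if_pos hjm]
      have hl := hf i l h1
      have hm := hf i j hij'
      rw [hjm] at hm
      omega
    · rw [if_neg hjm]
      have := hf i j hij'
      omega

end Op3

section Main
variable {n : ℕ}
open Matrix

lemma op3_homeo (A : Matrix (Fin n) (Fin n) (ZMod 2)) (l m : Fin n) (hlm : l ≠ m)
    (hc : ∀ i, A i l = A i m) (hAc : Acyc A) :
    Nonempty (OrbitSpace A ≃ₜ OrbitSpace (Phi3 l m A)) := by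
  refine transfer A (Phi3 l m A) hAc.diag (op3_acyc A l m hlm hc hAc).diag
    (mulT l m 0) (mulT l m 1)
    (mulT_continuous _ _ _) (mulT_continuous _ _ _)
    (mulT_mulT l m hlm) (mulT_mulT' l m hlm)
    (fun v => upd v l (v m))
    (fun v z => mulT_gMapT A l m hlm hc v z)
    (fun v => ⟨upd v l (v m), ?_⟩)
  show upd (upd v l (v m)) l (upd v l (v m) m) = v
  rw [upd_apply, if_neg (fun c => hlm c.symm), add_zero, upd_upd]

lemma step_acyc {A B : Matrix (Fin n) (Fin n) (ZMod 2)} (hAc : Acyc A)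
    (h : BottStep A B) : Acyc B := by
  cases h with
  | op1 σ A => exact op1_acyc A σ hAc
  | op2 k A => exact op2_acyc A k hAc
  | op3 l m A hlm hc => exact op3_acyc A l m hlm hc hAc

lemma step_homeo {A B : Matrix (Fin n) (Fin n) (ZMod 2)} (hAc : Acyc A)
    (h : BottStep A B) : Nonempty (OrbitSpace A ≃ₜ OrbitSpace B) := by
  cases h with
  | op1 σ A => exact op1_homeo A σ hAc
  | op2 k A => exact op2_homeo A k hAc
  | op3 l m A hlm hc => exact op3_homeo A l m hlm hc hAc

end Main

/-- If two Bott matrices are Bott equivalent, then the orbit spaces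
`T^n/G(A)` and `T^n/G(B)` are homeomorphic. -/
theorem orbitSpace_homeomorph_of_bottEquiv {n : ℕ}
    (A B : Matrix (Fin n) (Fin n) (ZMod 2)) (hA : IsBott A) (hB : IsBott B)
    (h : BottEquivM A B) :
    Nonempty (OrbitSpace A ≃ₜ OrbitSpace B) := by
  have key : ∀ C, BottEquivM A C → Acyc C ∧ Nonempty (OrbitSpace A ≃ₜ OrbitSpace C) := by
    intro C hC
    induction hC with
    | refl => exact ⟨isBott_acyc hA, ⟨Homeomorph.refl _⟩⟩
    | tail hab hbc ih =>
      obtain ⟨hPb, ⟨e⟩⟩ := ih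
      obtain ⟨e2⟩ := step_homeo hPb hbc
      exact ⟨step_acyc hPb hbc, ⟨e.trans e2⟩⟩
  exact (key B h).2
end

section
/- Let D be an indecomposable acyclic digraph, let Y = V(D)∖L₀(D), and let G be an acyclic digraph disjoint from D. If H is obtained from the disjoint union D ⊕ G by applying a finite sequence of slides on pairs of roots of D ⊕ G, then there exists a set X of roots of H with |X| = |L₀(D)| such that the induced subgraph H[X ∪ Y] is connected. -/
/-- Local complementation at `v`: arc set `A(D) Δ (N⁻_D(v) × N⁺_D(v))`. -/
def localComp {V : Type*} (R : V → V → Prop) (v : V) : V → V → Prop :=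
  fun x y => Xor' (R x y) (R x v ∧ R v y)

/-- The slide on `uv`: arc set `A(D) Δ {(v,w) : w ∈ N⁺_D(u)}`. -/
def slideRel {V : Type*} (R : V → V → Prop) (u v : V) : V → V → Prop :=
  fun x y => Xor' (R x y) (x = v ∧ R u y)

/-- A digraph is acyclic if it has no directed cycle. -/
def AcyclicRel {V : Type*} (R : V → V → Prop) : Prop :=
  ∀ v : V, ¬ Relation.TransGen R v v

/-- One graph operation: a local complementation or a legal slide. -/
inductive GStep {V : Type*} : (V → V → Prop) → (V → V → Prop) → Prop
  | lc (R : V → V → Prop) (v : V) : GStep R (localComp R v)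
  | sl (R : V → V → Prop) (u v : V) (h : u ≠ v) (hN : ∀ w, R w u ↔ R w v) :
      GStep R (slideRel R u v)

/-- Bott equivalence of digraphs. -/
def BottEquivD {V : Type*} {W : Type*} (R : V → V → Prop) (S : W → W → Prop) : Prop :=
  ∃ R' : V → V → Prop, Relation.ReflTransGen GStep R R' ∧
    ∃ e : V ≃ W, ∀ a b : V, R' a b ↔ S (e a) (e b)

/-- A digraph is connected if its underlying undirected graph is connected. -/
def ConnectedRel {V : Type*} (R : V → V → Prop) : Prop :=
  ∀ a b : V, Relation.ReflTransGen (fun x y => R x y ∨ R y x) a b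

/-- An acyclic digraph is indecomposable if every acyclic digraph Bott
equivalent to it is connected. -/
def IndecompD {V : Type*} [Fintype V] (R : V → V → Prop) : Prop :=
  ∀ (m : ℕ) (S : Fin m → Fin m → Prop), BottEquivD R S → ConnectedRel S

/-- One slide performed on a pair of distinct roots. -/
inductive RootSlide {V : Type*} : (V → V → Prop) → (V → V → Prop) → Prop
  | mk (R : V → V → Prop) (u v : V) (h : u ≠ v)
      (hu : ∀ w, ¬ R w u) (hv : ∀ w, ¬ R w v) : RootSlide R (slideRel R u v)

/-- The induced subgraph of `R` on `S` is connected. -/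
def ConnectedOn {V : Type*} (R : V → V → Prop) (S : Set V) : Prop :=
  ∀ a ∈ S, ∀ b ∈ S,
    Relation.ReflTransGen (fun x y => x ∈ S ∧ y ∈ S ∧ (R x y ∨ R y x)) a b

set_option linter.unusedSectionVars false
set_option linter.unusedVariables false


section Aux

open Matrix

variable {U : Type*}

abbrev RootT (R : U → U → Prop) : Type _ := {x : U // ∀ w, ¬ R w x}

noncomputable instance (R : U → U → Prop) [Finite U] : Fintype (RootT R) :=
  Fintype.ofFinite _

noncomputable instance (R : U → U → Prop) : DecidableEq (RootT R) := Classical.decEq _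

open Classical in
noncomputable def rowsM (R : U → U → Prop) : RootT R → U → ZMod 2 :=
  fun s b => if R s.1 b then 1 else 0

open Classical in
noncomputable def Phi [Finite U] (R : U → U → Prop)
    (E : Matrix (RootT R) (RootT R) (ZMod 2)) : U → U → Prop :=
  fun a b => if h : ∀ w, ¬ R w a then (∑ s, E ⟨a, h⟩ s * rowsM R s b) = 1 else R a b

variable [Finite U] {R : U → U → Prop}

lemma phi_of_root (E : Matrix (RootT R) (RootT R) (ZMod 2)) {a : U} (h : ∀ w, ¬ R w a) (b : U) :
    Phi R E a b ↔ (∑ s, E ⟨a, h⟩ s * rowsM R s b) = 1 := by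
  unfold Phi; rw [dif_pos h]

lemma phi_of_not_root (E : Matrix (RootT R) (RootT R) (ZMod 2)) {a : U}
    (h : ¬ ∀ w, ¬ R w a) (b : U) : Phi R E a b ↔ R a b := by
  unfold Phi; rw [dif_neg h]

lemma rowsM_eq_zero {s : RootT R} {b : U} (hb : ∀ w, ¬ R w b) : rowsM R s b = 0 := by
  unfold rowsM; rw [if_neg (hb _)]

lemma not_phi_into_root (E : Matrix (RootT R) (RootT R) (ZMod 2)) {b : U}
    (hb : ∀ w, ¬ R w b) (a : U) : ¬ Phi R E a b := by
  by_cases h : ∀ w, ¬ R w a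
  · rw [phi_of_root E h]
    have : (∑ s, E ⟨a, h⟩ s * rowsM R s b) = 0 :=
      Finset.sum_eq_zero fun s _ => by rw [rowsM_eq_zero hb, mul_zero]
    rw [this]; exact zero_ne_one
  · rw [phi_of_not_root E h]; exact hb a

lemma phi_one : Phi R 1 = R := by
  funext a b
  apply propext
  by_cases h : ∀ w, ¬ R w a
  · rw [phi_of_root 1 h]
    have hsum : (∑ s, (1 : Matrix (RootT R) (RootT R) (ZMod 2)) ⟨a, h⟩ s * rowsM R s b)
        = rowsM R ⟨a, h⟩ b := by
      rw [Fintype.sum_eq_single (⟨a, h⟩ : RootT R)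
        (fun s hs => by rw [Matrix.one_apply_ne (Ne.symm hs), zero_mul])]
      rw [Matrix.one_apply_eq, one_mul]
    rw [hsum]
    unfold rowsM
    by_cases hr : R a b
    · simp [hr]
    · simp [hr]
  · rw [phi_of_not_root 1 h]

lemma mulVec_inj_of_isUnit {n : Type*} [Fintype n] [DecidableEq n]
    {E : Matrix n n (ZMod 2)} (hE : IsUnit E)
    {x : n → ZMod 2} (hx : E.mulVec x = 0) : x = 0 := by
  obtain ⟨u, rfl⟩ := hE
  have h1 : x = (↑u⁻¹ : Matrix n n (ZMod 2)).mulVec ((↑u : Matrix n n (ZMod 2)).mulVec x) := by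
    rw [Matrix.mulVec_mulVec, Units.inv_mul, Matrix.one_mulVec]
  rw [h1, hx, Matrix.mulVec_zero]

lemma roots_phi {E : Matrix (RootT R) (RootT R) (ZMod 2)} (hE : IsUnit E) (b : U) :
    (∀ w, ¬ Phi R E w b) ↔ (∀ w, ¬ R w b) := by
  constructor
  · intro hb
    by_contra hnb
    push_neg at hnb
    obtain ⟨w, hw⟩ := hnb
    by_cases hwr : ∀ x, ¬ R x w
    · set c : RootT R → ZMod 2 := fun s => rowsM R s b with hc
      have hcne : c ≠ 0 := by
        intro h0
        have h1 : c ⟨w, hwr⟩ = 0 := by rw [h0]; rfl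
        rw [hc] at h1
        simp only [rowsM, if_pos hw] at h1
        exact one_ne_zero h1
      have hEc : E.mulVec c ≠ 0 := fun h0 => hcne (mulVec_inj_of_isUnit hE h0)
      obtain ⟨r, hr⟩ := Function.ne_iff.mp hEc
      have hr1 : (∑ s, E r s * rowsM R s b) = 1 := by
        have h2 : E.mulVec c r = ∑ s, E r s * rowsM R s b := by
          simp [Matrix.mulVec, dotProduct, hc]
        have h3 : ∀ x : ZMod 2, x ≠ 0 → x = 1 := by decide
        rw [h2] at hr
        exact h3 _ (by simpa using hr)
      exact hb r.1 ((phi_of_root E r.2 b).mpr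
        (by rw [show (⟨r.1, r.2⟩ : RootT R) = r from rfl]; exact hr1))
    · exact hb w ((phi_of_not_root E hwr b).mpr hw)
  · intro hb w
    exact not_phi_into_root E hb w

lemma xor_zmod (p q : ZMod 2) : Xor' (p = 1) (q = 1) ↔ p + q = 1 := by revert p q; unfold Xor'; decide

lemma slide_phi (E : Matrix (RootT R) (RootT R) (ZMod 2)) {u v : U}
    (hu : ∀ w, ¬ R w u) (hv : ∀ w, ¬ R w v) :
    slideRel (Phi R E) u v
      = Phi R ((Matrix.transvection (⟨v, hv⟩ : RootT R) ⟨u, hu⟩ (1 : ZMod 2) : Matrix (RootT R) (RootT R) (ZMod 2)) * E) := by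
  funext x y
  apply propext
  by_cases hx : x = v
  · subst hx
    unfold slideRel
    rw [phi_of_root E hv y, phi_of_root E hu y,
      phi_of_root ((Matrix.transvection (⟨x, hv⟩ : RootT R) ⟨u, hu⟩ (1 : ZMod 2) : Matrix (RootT R) (RootT R) (ZMod 2)) * E) hv y]
    have hs : (∑ s, ((Matrix.transvection (⟨x, hv⟩ : RootT R) ⟨u, hu⟩ (1 : ZMod 2) : Matrix (RootT R) (RootT R) (ZMod 2)) * E) ⟨x, hv⟩ s * rowsM R s y)
        = (∑ s, E ⟨x, hv⟩ s * rowsM R s y) + (∑ s, E ⟨u, hu⟩ s * rowsM R s y) := by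
      rw [← Finset.sum_add_distrib]
      refine Finset.sum_congr rfl fun s _ => ?_
      rw [Matrix.transvection_mul_apply_same, one_mul, add_mul]
    rw [hs]
    have h2 : (x = x ∧ (∑ s, E ⟨u, hu⟩ s * rowsM R s y) = 1)
        ↔ ((∑ s, E ⟨u, hu⟩ s * rowsM R s y) = 1) := by simp
    rw [h2]
    exact xor_zmod _ _
  · unfold slideRel
    have h2 : ¬ (x = v ∧ Phi R E u y) := fun hh => hx hh.1
    have hrow : ∀ (hxr : ∀ w, ¬ R w x) (s : RootT R),
        ((Matrix.transvection (⟨v, hv⟩ : RootT R) ⟨u, hu⟩ (1 : ZMod 2) : Matrix (RootT R) (RootT R) (ZMod 2)) * E) ⟨x, hxr⟩ s = E ⟨x, hxr⟩ s := by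
      intro hxr s
      exact Matrix.transvection_mul_apply_of_ne _ _ _ _
        (fun hh => hx (congrArg Subtype.val hh)) _ _
    constructor
    · intro hh
      have hxy : Phi R E x y := by
        rcases hh with ⟨h3, _⟩ | ⟨h3, _⟩
        · exact h3
        · exact absurd h3 h2
      by_cases hxr : ∀ w, ¬ R w x
      · rw [phi_of_root E hxr y] at hxy
        rw [phi_of_root _ hxr y]
        rw [Finset.sum_congr rfl fun s _ => by rw [hrow hxr]]
        exact hxy
      · rw [phi_of_not_root E hxr y] at hxy
        rw [phi_of_not_root _ hxr y]
        exact hxy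
    · intro hh
      left
      refine ⟨?_, h2⟩
      by_cases hxr : ∀ w, ¬ R w x
      · rw [phi_of_root _ hxr y] at hh
        rw [phi_of_root E hxr y]
        rw [Finset.sum_congr rfl fun s _ => by rw [hrow hxr]] at hh
        exact hh
      · rw [phi_of_not_root _ hxr y] at hh
        rw [phi_of_not_root E hxr y]
        exact hh

end Aux
section Aux2

open Matrix

variable {U : Type*} [Finite U] {R : U → U → Prop}

lemma rootSlide_phi (E : Matrix (RootT R) (RootT R) (ZMod 2)) {u v : U}
    (hu : ∀ w, ¬ R w u) (hv : ∀ w, ¬ R w v) (huv : u ≠ v) :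
    RootSlide (Phi R E)
      (Phi R ((Matrix.transvection (⟨v, hv⟩ : RootT R) ⟨u, hu⟩ (1 : ZMod 2) :
        Matrix (RootT R) (RootT R) (ZMod 2)) * E)) := by
  rw [← slide_phi E hu hv]
  exact RootSlide.mk _ u v huv (not_phi_into_root E hu) (not_phi_into_root E hv)

lemma invariant_phi {H : U → U → Prop}
    (h : Relation.ReflTransGen RootSlide R H) :
    ∃ E : Matrix (RootT R) (RootT R) (ZMod 2), IsUnit E ∧ H = Phi R E := by
  induction h with
  | refl => exact ⟨1, isUnit_one, phi_one.symm⟩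
  | tail _ hstep ih =>
      obtain ⟨E, hE, rfl⟩ := ih
      cases hstep with
      | mk u v huv hu hv =>
          have hu' : ∀ w, ¬ R w u := (roots_phi hE u).mp hu
          have hv' : ∀ w, ¬ R w v := (roots_phi hE v).mp hv
          refine ⟨_, ?_, slide_phi E hu' hv'⟩
          refine IsUnit.mul ?_ hE
          rw [Matrix.isUnit_iff_isUnit_det,
            Matrix.det_transvection_of_ne _ _ (fun hh => huv.symm (congrArg Subtype.val hh)) _]
          exact isUnit_one

lemma reach_phi (L : List (Matrix.TransvectionStruct (RootT R) (ZMod 2)))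
    (E : Matrix (RootT R) (RootT R) (ZMod 2)) :
    Relation.ReflTransGen RootSlide (Phi R E)
      (Phi R ((L.map Matrix.TransvectionStruct.toMatrix).prod * E)) := by
  induction L generalizing E with
  | nil => rw [List.map_nil, List.prod_nil, one_mul]
  | cons t L ih =>
      rcases t with ⟨i, j, hij, c⟩
      rcases (show c = 0 ∨ c = 1 from by revert c; decide) with rfl | rfl
      · have h1 : (Matrix.TransvectionStruct.mk i j hij (0 : ZMod 2)).toMatrix = 1 := by
          rw [Matrix.TransvectionStruct.toMatrix_mk, Matrix.transvection_zero]
        rw [List.map_cons, List.prod_cons, h1, one_mul]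
        exact ih E
      · rw [List.map_cons, List.prod_cons, Matrix.TransvectionStruct.toMatrix_mk, mul_assoc]
        refine Relation.ReflTransGen.tail (ih E) ?_
        have hj : j.1 ≠ i.1 := fun hh => hij (Subtype.ext hh.symm)
        have := rootSlide_phi ((L.map Matrix.TransvectionStruct.toMatrix).prod * E)
          j.2 i.2 hj
        simpa using this

lemma exists_transvec_list {n : Type*} [Fintype n] [DecidableEq n]
    {E : Matrix n n (ZMod 2)} (hE : IsUnit E) :
    ∃ L : List (Matrix.TransvectionStruct n (ZMod 2)),
      (L.map Matrix.TransvectionStruct.toMatrix).prod = E := by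
  obtain ⟨L, L', d, hd⟩ := Matrix.Pivot.exists_list_transvec_mul_diagonal_mul_list_transvec E
  have hdet : IsUnit E.det := E.isUnit_iff_isUnit_det.mp hE
  have hdet2 : IsUnit (Matrix.diagonal d).det := by
    rw [hd, Matrix.det_mul, Matrix.det_mul, Matrix.TransvectionStruct.det_toMatrix_prod,
      Matrix.TransvectionStruct.det_toMatrix_prod, one_mul, mul_one] at hdet
    exact hdet
  have hd1 : Matrix.diagonal d = 1 := by
    rw [Matrix.det_diagonal] at hdet2
    have hne : ∀ i, d i ≠ 0 := by
      intro i hi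
      rw [Finset.prod_eq_zero (Finset.mem_univ i) hi] at hdet2
      exact hdet2.ne_zero rfl
    have hone : ∀ i, d i = 1 := fun i =>
      (show ∀ x : ZMod 2, x ≠ 0 → x = 1 from by decide) _ (hne i)
    have : d = fun _ => 1 := funext hone
    rw [this]
    exact Matrix.diagonal_one
  refine ⟨L ++ L', ?_⟩
  rw [List.map_append, List.prod_append, hd, hd1, mul_one]

end Aux2
section Aux3

open Matrix Submodule

lemma exists_invertible_submatrix {ρ κ : Type*} [Fintype ρ] [Fintype κ]
    [DecidableEq ρ] [DecidableEq κ]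
    (B : Matrix ρ κ (ZMod 2)) (hB : ∀ x : κ → ZMod 2, B.mulVec x = 0 → x = 0) :
    ∃ ι : κ → ρ, Function.Injective ι ∧
      IsUnit (Matrix.of (fun i i' : κ => B (ι i) i')) := by
  classical
  -- the rank of B is card κ
  have hinj : Function.Injective B.mulVecLin := by
    rw [← LinearMap.ker_eq_bot]
    exact LinearMap.ker_eq_bot'.mpr fun m hm => hB m (by simpa using hm)
  have hrank : B.rank = Fintype.card κ := by
    rw [Matrix.rank, LinearMap.finrank_range_of_inj hinj, Module.finrank_pi]
  have hrankT : Bᵀ.rank = Fintype.card κ := by rw [Matrix.rank_transpose]; exact hrank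
  have hspanrank : Module.finrank (ZMod 2) (span (ZMod 2) (Set.range B)) = Fintype.card κ := by
    have := Bᵀ.range_mulVecLin
    change _ = span (ZMod 2) (Set.range B) at this
    rw [← this]
    exact hrankT
  -- extract an independent spanning subset of the rows
  obtain ⟨t, hts, hspan, hindep⟩ := exists_linearIndependent (ZMod 2) (Set.range B)
  have htfin : t.Finite := (Set.finite_range B).subset hts
  haveI := htfin.fintype
  have htcard : t.toFinset.card = Fintype.card κ := by
    rw [← finrank_span_set_eq_card hindep, hspan]
    exact hspanrank
  have htcard' : Fintype.card t = Fintype.card κ := by rw [← Set.toFinset_card]; exact htcard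
  -- choose a preimage row index for each element of t
  have hchoice : ∀ w : t, ∃ r : ρ, B r = (w : κ → ZMod 2) := fun w => hts w.2
  choose g hg using hchoice
  have hginj : Function.Injective g := fun w w' hww' => by
    apply Subtype.ext
    rw [← hg w, ← hg w', hww']
  obtain e : κ ≃ t := (Fintype.equivOfCardEq htcard').symm
  refine ⟨fun i => g (e i), hginj.comp e.injective, ?_⟩
  set M : Matrix κ κ (ZMod 2) := Matrix.of (fun i i' : κ => B (g (e i)) i') with hM
  -- the rows of M are linearly independent
  have hrows : LinearIndependent (ZMod 2) (fun i : κ => (M i : κ → ZMod 2)) := by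
    have h1 : (fun i : κ => (M i : κ → ZMod 2)) = (fun w : t => (w : κ → ZMod 2)) ∘ e := by
      funext i
      show (fun i' => B (g (e i)) i') = _
      rw [show (fun i' => B (g (e i)) i') = B (g (e i)) from rfl, hg (e i)]
      rfl
    rw [h1]
    exact hindep.comp e e.injective
  -- a square matrix with independent rows is invertible
  have hdet : M.det ≠ 0 := by
    intro h0
    obtain ⟨v, hv0, hv⟩ := Matrix.exists_vecMul_eq_zero_iff.mpr h0
    apply hv0
    have hsum : (∑ i, v i • M i) = 0 := by
      funext j
      have h2 : (∑ i, v i • M i) j = M.vecMul v j := by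
        simp [Matrix.vecMul, dotProduct, Finset.sum_apply]
      rw [h2, hv]
    have hz := Fintype.linearIndependent_iff.mp hrows v hsum
    funext i
    exact hz i
  exact M.isUnit_iff_isUnit_det.mpr (isUnit_iff_ne_zero.mpr hdet)

end Aux3
section Aux4

open Matrix

def jmapDG {V W : Type*} (D : V → V → Prop) (G : W → W → Prop) :
    RootT D → RootT (Sum.LiftRel D G) :=
  fun d => ⟨Sum.inl d.1, fun w hw => by cases hw with | inl h' => exact d.2 _ h'⟩

lemma jmapDG_inj {V W : Type*} (D : V → V → Prop) (G : W → W → Prop) :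
    Function.Injective (jmapDG D G) := fun d d' hdd' =>
  Subtype.ext (Sum.inl_injective (congrArg Subtype.val hdd'))

lemma rowsM_jmap {V W : Type*} (D : V → V → Prop) (G : W → W → Prop) (i : RootT D) (y : V) :
    rowsM (Sum.LiftRel D G) (jmapDG D G i) (Sum.inl y) = rowsM D i y := by
  unfold rowsM jmapDG
  by_cases hd : D i.1 y
  · rw [if_pos (Sum.LiftRel.inl hd), if_pos hd]
  · have hnot : ¬ Sum.LiftRel D G (Sum.inl i.1) (Sum.inl y) := by
      intro hc
      cases hc with
      | inl h' => exact hd h'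
    rw [if_neg hnot, if_neg hd]

lemma rowsM_inr_inl {V W : Type*} (D : V → V → Prop) (G : W → W → Prop)
    (s : RootT (Sum.LiftRel D G)) (g : W) (y : V) (hs : s.1 = Sum.inr g) :
    rowsM (Sum.LiftRel D G) s (Sum.inl y) = 0 := by
  unfold rowsM
  rw [if_neg]
  intro hc
  rw [hs] at hc
  cases hc

lemma sum_jmap_eq {V W : Type*} [Fintype V] [Fintype W] (D : V → V → Prop) (G : W → W → Prop)
    (E : Matrix (RootT (Sum.LiftRel D G)) (RootT (Sum.LiftRel D G)) (ZMod 2))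
    (r : RootT (Sum.LiftRel D G)) (y : V) :
    (∑ s, E r s * rowsM (Sum.LiftRel D G) s (Sum.inl y))
      = ∑ i : RootT D, E r (jmapDG D G i) * rowsM D i y := by
  have hvan : ∀ s ∈ Finset.univ, s ∉ Finset.image (jmapDG D G) Finset.univ →
      E r s * rowsM (Sum.LiftRel D G) s (Sum.inl y) = 0 := by
    rintro ⟨x, hx⟩ _ hs
    cases x with
    | inl v =>
        exfalso
        apply hs
        rw [Finset.mem_image]
        refine ⟨⟨v, fun w hw => hx (Sum.inl w) (Sum.LiftRel.inl hw)⟩, Finset.mem_univ _, ?_⟩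
        apply Subtype.ext
        rfl
    | inr g =>
        rw [rowsM_inr_inl D G _ g y rfl, mul_zero]
  rw [← Finset.sum_subset (Finset.subset_univ (Finset.image (jmapDG D G) Finset.univ)) hvan]
  rw [Finset.sum_image (fun a _ b _ hab => jmapDG_inj D G hab)]
  exact Finset.sum_congr rfl fun i _ => by rw [rowsM_jmap]

open Classical in
noncomputable def rootSplit {V U : Type*} (D : V → V → Prop) (f : RootT D → U) (g : V → U) :
    V → U := fun a => if h : ∀ w, ¬ D w a then f ⟨a, h⟩ else g a

lemma rootSplit_pos {V U : Type*} (D : V → V → Prop) (f : RootT D → U) (g : V → U)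
    {a : V} (h : ∀ w, ¬ D w a) : rootSplit D f g a = f ⟨a, h⟩ := by
  unfold rootSplit; rw [dif_pos h]

lemma rootSplit_neg {V U : Type*} (D : V → V → Prop) (f : RootT D → U) (g : V → U)
    {a : V} (h : ¬ ∀ w, ¬ D w a) : rootSplit D f g a = g a := by
  unfold rootSplit; rw [dif_neg h]

end Aux4



/-- Let `D` be an indecomposable acyclic digraph, `Y = V(D)∖L₀(D)`, and let
`G` be an acyclic digraph disjoint from `D`.  If `H` is obtained from `D ⊕ G`
by slides on pairs of roots, then there is a set `X` of roots of `H` with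
`|X| = |L₀(D)|` such that the induced subgraph `H[X ∪ Y]` is connected. -/

theorem indecomposable_component_survives {V W : Type*} [Fintype V] [Fintype W]
    (D : V → V → Prop) (G : W → W → Prop)
    (hD : AcyclicRel D) (hind : IndecompD D) (hG : AcyclicRel G)
    (H : (V ⊕ W) → (V ⊕ W) → Prop)
    (h : Relation.ReflTransGen RootSlide (Sum.LiftRel D G) H) :
    ∃ X : Set (V ⊕ W), X ⊆ {v : V ⊕ W | ∀ w, ¬ H w v} ∧
      Nat.card ↥X = Nat.card {v : V | ∀ w, ¬ D w v} ∧
      ConnectedOn H (X ∪ Sum.inl '' {v : V | ∃ w, D w v}) := by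
  obtain ⟨E, hE, rfl⟩ := invariant_phi h
  -- the submatrix of E on the columns of the roots of D has trivial kernel
  have hker : ∀ x : RootT D → ZMod 2,
      (Matrix.of fun (r : RootT (Sum.LiftRel D G)) (i : RootT D) =>
        E r (jmapDG D G i)).mulVec x = 0 → x = 0 := by
    intro x hx
    set xt : RootT (Sum.LiftRel D G) → ZMod 2 :=
      fun s => ∑ i, if jmapDG D G i = s then x i else 0 with hxt
    have hxt0 : E.mulVec xt = 0 := by
      funext r
      have h1 : E.mulVec xt r = ∑ s, E r s * xt s := by
        simp [Matrix.mulVec, dotProduct]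
      have h2 : ∀ s, E r s * xt s = ∑ i, if jmapDG D G i = s then E r (jmapDG D G i) * x i else 0 := by
        intro s
        rw [hxt, Finset.mul_sum]
        refine Finset.sum_congr rfl fun i _ => ?_
        by_cases hji : jmapDG D G i = s
        · rw [if_pos hji, if_pos hji, hji]
        · rw [if_neg hji, if_neg hji, mul_zero]
      have h3 : ∀ i : RootT D,
          (∑ s, if jmapDG D G i = s then E r (jmapDG D G i) * x i else 0)
            = E r (jmapDG D G i) * x i := by
        intro i
        rw [Finset.sum_ite_eq, if_pos (Finset.mem_univ _)]
      have h4 : (Matrix.of fun (r : RootT (Sum.LiftRel D G)) (i : RootT D) =>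
          E r (jmapDG D G i)).mulVec x r = ∑ i, E r (jmapDG D G i) * x i := by
        simp [Matrix.mulVec, dotProduct]
      rw [h1, Finset.sum_congr rfl fun s _ => h2 s, Finset.sum_comm]
      rw [Finset.sum_congr rfl fun i _ => h3 i, ← h4, hx]
    have hxtz := mulVec_inj_of_isUnit hE hxt0
    funext i
    have h4 : xt (jmapDG D G i) = x i := by
      have h5 : xt (jmapDG D G i)
          = ∑ i', if jmapDG D G i' = jmapDG D G i then x i' else 0 := rfl
      rw [h5]
      rw [Finset.sum_eq_single i (fun i' _ hne => if_neg fun hc => hne (jmapDG_inj D G hc))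
        (fun hni => absurd (Finset.mem_univ _) hni)]
      rw [if_pos rfl]
    rw [← h4, hxtz]
    rfl
  obtain ⟨ι, hιinj, hF⟩ := exists_invertible_submatrix
    (Matrix.of fun (r : RootT (Sum.LiftRel D G)) (i : RootT D) => E r (jmapDG D G i)) hker
  set F : Matrix (RootT D) (RootT D) (ZMod 2) :=
    Matrix.of (fun i i' : RootT D => E (ι i) (jmapDG D G i')) with hFdef
  have hF' : IsUnit F := hF
  -- D reaches Phi D F by root slides
  obtain ⟨L, hL⟩ := exists_transvec_list hF'
  have hreach : Relation.ReflTransGen RootSlide D (Phi D F) := by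
    have h5 := reach_phi (R := D) L 1
    rw [mul_one, hL, phi_one] at h5
    exact h5
  have hGreach : Relation.ReflTransGen GStep D (Phi D F) := by
    refine Relation.ReflTransGen.mono ?_ _ _ hreach
    intro a b hab
    cases hab with
    | mk u v huv hu hv => exact GStep.sl _ u v huv (fun w => iff_of_false (hu w) (hv w))
  -- Phi D F is connected, by indecomposability
  have hconn : ConnectedRel (Phi D F) := by
    set eV := Fintype.equivFin V with heV
    have hbott : BottEquivD D (fun i j => Phi D F (eV.symm i) (eV.symm j)) :=
      ⟨Phi D F, hGreach, eV, fun a b => by simp⟩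
    have hconnS := hind (Fintype.card V) _ hbott
    intro a b
    have hw := hconnS (eV a) (eV b)
    have h5 := Relation.ReflTransGen.lift (r := fun x y =>
        (fun i j => Phi D F (eV.symm i) (eV.symm j)) x y ∨
        (fun i j => Phi D F (eV.symm i) (eV.symm j)) y x)
      (p := fun x y => Phi D F x y ∨ Phi D F y x) eV.symm (fun x y hxy => hxy) _ _ hw
    simpa [Function.onFun] using h5
  refine ⟨Set.range (fun d : RootT D => ((ι d).1 : V ⊕ W)), ?_, ?_, ?_⟩
  · rintro x ⟨d, rfl⟩
    intro w
    exact not_phi_into_root E (ι d).2 w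
  · have h1 : Nat.card (Set.range fun d : RootT D => ((ι d).1 : V ⊕ W)) = Nat.card (RootT D) :=
      Nat.card_range_of_injective (Subtype.val_injective.comp hιinj)
    exact h1
  · -- connectivity of the induced subgraph
    set S : Set (V ⊕ W) :=
      Set.range (fun d : RootT D => ((ι d).1 : V ⊕ W)) ∪ Sum.inl '' {v : V | ∃ w, D w v} with hS
    set ψ : V → V ⊕ W := rootSplit D (fun d : RootT D => ((ι d).1 : V ⊕ W)) Sum.inl with hψ
    have hψS : ∀ a : V, ψ a ∈ S := by
      intro a
      by_cases ha : ∀ w, ¬ D w a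
      · rw [hψ, rootSplit_pos D _ _ ha]
        exact Or.inl ⟨⟨a, ha⟩, rfl⟩
      · rw [hψ, rootSplit_neg D _ _ ha]
        push_neg at ha
        exact Or.inr ⟨a, ha, rfl⟩
    have hstep : ∀ x y : V, Phi D F x y → Phi (Sum.LiftRel D G) E (ψ x) (ψ y) := by
      intro x y hxy
      by_cases hx : ∀ w, ¬ D w x
      · rw [phi_of_root F hx y] at hxy
        have hy : ¬ (∀ w, ¬ D w y) := by
          intro hy
          rw [Finset.sum_eq_zero (fun s _ => by rw [rowsM_eq_zero hy, mul_zero])] at hxy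
          exact zero_ne_one hxy
        rw [hψ, rootSplit_pos D _ _ hx, rootSplit_neg D _ _ hy]
        rw [phi_of_root E (ι ⟨x, hx⟩).2 (Sum.inl y)]
        have hsum := sum_jmap_eq D G E (ι ⟨x, hx⟩) y
        rw [show (⟨(ι ⟨x, hx⟩).1, (ι ⟨x, hx⟩).2⟩ : RootT (Sum.LiftRel D G)) = ι ⟨x, hx⟩ from rfl]
        rw [hsum]
        exact hxy
      · rw [phi_of_not_root F hx y] at hxy
        have hy : ¬ (∀ w, ¬ D w y) := fun hy => hy x hxy
        rw [hψ, rootSplit_neg D _ _ hx, rootSplit_neg D _ _ hy]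
        have hx' : ¬ (∀ w, ¬ Sum.LiftRel D G w (Sum.inl x)) := by
          push_neg at hx
          obtain ⟨w, hw⟩ := hx
          intro hall
          exact hall (Sum.inl w) (Sum.LiftRel.inl hw)
        rw [phi_of_not_root E hx' (Sum.inl y)]
        exact Sum.LiftRel.inl hxy
    have hsurj : ∀ x ∈ S, ∃ a : V, ψ a = x := by
      intro x hx
      rcases hx with ⟨d, rfl⟩ | ⟨y, hy, rfl⟩
      · exact ⟨d.1, by rw [hψ, rootSplit_pos D _ _ d.2]⟩
      · refine ⟨y, ?_⟩
        obtain ⟨w, hw⟩ := hy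
        rw [hψ, rootSplit_neg D _ _ (fun hall => hall w hw)]
    intro a ha b hb
    obtain ⟨a₀, rfl⟩ := hsurj a ha
    obtain ⟨b₀, rfl⟩ := hsurj b hb
    refine Relation.ReflTransGen.lift ψ ?_ _ _ (hconn a₀ b₀)
    intro x y hxy
    refine ⟨hψS x, hψS y, ?_⟩
    rcases hxy with hxy | hxy
    · exact Or.inl (hstep x y hxy)
    · exact Or.inr (hstep y x hxy)
end
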